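/- Let f : ℝ^d → ℝ be differentiable with L-Lipschitz gradient, let 0 < σ ≤ L, set κ = L/σ and ω = (√κ − 1)/(√κ + 1), and define iterates by x₀ = y₀ and, for t ≥ 1, y_t = x_{t−1} − (1/L)∇f(x_{t−1}) and x_t = y_t + ω(y_t − y_{t−1}). Fix w ∈ ℝ^d and t ≥ 1. If f(y_t) − f(w) > (1 − 1/√κ)^t · ψ(w), where ψ(w) = f(y₀) − f(w) + (σ/2)‖w − y₀‖², then there exist s ∈ {0, 1, …, t−1} and a point u ∈ {y_s, w} such that f(u) < f(x_s) + ∇f(x_s)ᵀ(u − x_s) + (σ/2)‖u − x_s‖², i.e., the pair (u, x_s) witnesses that f is not σ-strongly convex. -/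

import Mathlib

open scoped InnerProductSpace

theorem descent_lemma' {d : ℕ} {f : EuclideanSpace ℝ (Fin d) → ℝ}
    {g : EuclideanSpace ℝ (Fin d) → EuclideanSpace ℝ (Fin d)} {L : ℝ}
    (hgrad : ∀ x, HasGradientAt f (g x) x)
    (hlip : ∀ x y, ‖g x - g y‖ ≤ L * ‖x - y‖)
    (u v : EuclideanSpace ℝ (Fin d)) :
    f v ≤ f u + ⟪g u, v - u⟫_ℝ + L / 2 * ‖v - u‖ ^ 2 := by
  have hγ : ∀ θ : ℝ, HasDerivAt (fun θ : ℝ => u + θ • (v - u)) (v - u) θ := by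
    intro θ
    simpa using ((hasDerivAt_id θ).smul_const (v - u)).const_add u
  have hcomp : ∀ θ : ℝ, HasDerivAt (fun θ : ℝ => f (u + θ • (v - u)))
      ⟪g (u + θ • (v - u)), v - u⟫_ℝ θ := by
    intro θ
    have h1 := (hgrad (u + θ • (v - u))).hasFDerivAt.comp_hasDerivAt θ (hγ θ)
    simp [InnerProductSpace.toDual_apply_apply] at h1
    exact h1
  set K := ‖v - u‖ ^ 2 with hK
  set c := ⟪g u, v - u⟫_ℝ with hc
  set h : ℝ → ℝ := fun θ => f (u + θ • (v - u)) - θ * c - θ ^ 2 * (L / 2 * K) with hh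
  have hd : ∀ θ : ℝ, HasDerivAt h
      (⟪g (u + θ • (v - u)), v - u⟫_ℝ - c - θ * (L * K)) θ := by
    intro θ
    have h2 : HasDerivAt (fun θ : ℝ => θ * c) c θ := by
      simpa using (hasDerivAt_id θ).mul_const c
    have h3 : HasDerivAt (fun θ : ℝ => θ ^ 2 * (L / 2 * K)) (θ * (L * K)) θ := by
      have := (hasDerivAt_pow 2 θ).mul_const (L / 2 * K)
      refine this.congr_deriv ?_
      push_cast; ring
    exact ((hcomp θ).sub h2).sub h3
  have hmono : AntitoneOn h (Set.Icc 0 1) := by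
    apply antitoneOn_of_deriv_nonpos (convex_Icc 0 1)
    · exact fun θ _ => (hd θ).continuousAt.continuousWithinAt
    · exact fun θ _ => ((hd θ).differentiableAt).differentiableWithinAt
    · intro θ hθ
      rw [interior_Icc] at hθ
      rw [(hd θ).deriv]
      have h5 : ⟪g (u + θ • (v - u)) - g u, v - u⟫_ℝ ≤ ‖g (u + θ • (v - u)) - g u‖ * ‖v - u‖ :=
        real_inner_le_norm _ _
      have h6 : ‖g (u + θ • (v - u)) - g u‖ ≤ L * (θ * ‖v - u‖) := by
        have := hlip (u + θ • (v - u)) u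
        simpa [norm_smul, abs_of_pos hθ.1, mul_assoc] using this
      have h7 : ⟪g (u + θ • (v - u)) - g u, v - u⟫_ℝ = ⟪g (u + θ • (v - u)), v - u⟫_ℝ - c := by
        rw [inner_sub_left]
      have h8 : ‖g (u + θ • (v - u)) - g u‖ * ‖v - u‖ ≤ L * (θ * ‖v - u‖) * ‖v - u‖ :=
        mul_le_mul_of_nonneg_right h6 (norm_nonneg _)
      have h9 : L * (θ * ‖v - u‖) * ‖v - u‖ = θ * (L * K) := by rw [hK]; ring
      linarith [h5, h7 ▸ h5]
  have h10 := hmono (Set.left_mem_Icc.2 zero_le_one) (Set.right_mem_Icc.2 zero_le_one) zero_le_one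
  have h0 : h 0 = f u := by simp [hh]
  have h1 : h 1 = f v - c - L / 2 * K := by
    simp only [hh, one_smul, one_pow, one_mul]
    rw [show u + (v - u) = v by abel]
  rw [h0, h1] at h10
  linarith


/-- If AGD fails to make the progress guaranteed for σ-strongly convex functions, then
some pair (u, x_s) with u ∈ {y_s, w} witnesses that f is not σ-strongly convex. -/
theorem agd_slow_progress_yields_nonconvexity_witness
    {d : ℕ} (f : EuclideanSpace ℝ (Fin d) → ℝ)
    (g : EuclideanSpace ℝ (Fin d) → EuclideanSpace ℝ (Fin d))
    (L σ : ℝ) (hσ : 0 < σ) (hσL : σ ≤ L)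
    (hgrad : ∀ x, HasGradientAt f (g x) x)
    (hlip : ∀ x y, ‖g x - g y‖ ≤ L * ‖x - y‖)
    (κ ω : ℝ) (hκ : κ = L / σ)
    (hω : ω = (Real.sqrt κ - 1) / (Real.sqrt κ + 1))
    (x y : ℕ → EuclideanSpace ℝ (Fin d))
    (hx0 : x 0 = y 0)
    (hy : ∀ t : ℕ, y (t + 1) = x t - (1 / L) • g (x t))
    (hx : ∀ t : ℕ, x (t + 1) = y (t + 1) + ω • (y (t + 1) - y t))
    (w : EuclideanSpace ℝ (Fin d)) (t : ℕ) (ht : 1 ≤ t)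
    (hslow : f (y t) - f w > (1 - 1 / Real.sqrt κ) ^ t *
      (f (y 0) - f w + σ / 2 * ‖w - y 0‖ ^ 2)) :
    ∃ s, s < t ∧ ∃ u ∈ ({y s, w} : Set (EuclideanSpace ℝ (Fin d))),
      f u < f (x s) + ⟪g (x s), u - x s⟫_ℝ + σ / 2 * ‖u - x s‖ ^ 2 := by
  by_contra hcon
  push_neg at hcon
  have hL : 0 < L := hσ.trans_le hσL
  have hκ1 : 1 ≤ κ := by rw [hκ, le_div_iff₀ hσ]; linarith
  have hκ0 : 0 ≤ κ := by linarith
  set r := Real.sqrt κ with hr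
  have hr1 : 1 ≤ r := by
    rw [hr, show (1:ℝ) = Real.sqrt 1 by simp]
    exact Real.sqrt_le_sqrt hκ1
  have hr0 : 0 < r := lt_of_lt_of_le one_pos hr1
  have hrsq : r ^ 2 = κ := Real.sq_sqrt hκ0
  have hLr : L = σ * r ^ 2 := by rw [hrsq, hκ]; field_simp
  set τ := 1 / r with hτ
  have hτ0 : 0 < τ := by positivity
  have hτ1 : τ ≤ 1 := by rw [hτ, div_le_one hr0]; exact hr1
  have h1τ : 0 ≤ 1 - τ := by linarith
  have hσr : σ * r ≠ 0 := by positivity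
  have hrne : r ≠ 0 := ne_of_gt hr0
  have hr1ne : r + 1 ≠ 0 := by positivity
  have hσne : σ ≠ 0 := ne_of_gt hσ
  -- one step of the potential argument
  have key : ∀ k, k < t →
      f (y (k+1)) - f w + σ / 2 * ‖(1+r) • x (k+1) - r • y (k+1) - w‖ ^ 2 ≤
      (1-τ) * (f (y k) - f w + σ / 2 * ‖(1+r) • x k - r • y k - w‖ ^ 2) := by
    intro k hk
    obtain ⟨G, hG⟩ : ∃ G, G = g (x k) := ⟨_, rfl⟩
    obtain ⟨b, hb⟩ : ∃ b, b = x k - w := ⟨_, rfl⟩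
    obtain ⟨mm, hm⟩ : ∃ mm, mm = y k - x k := ⟨_, rfl⟩
    have hzk : (1+r) • x k - r • y k - w = b - r • mm := by rw [hb, hm]; module
    have hzk1 : (1+r) • x (k+1) - r • y (k+1) - w = (b - (r-1) • mm) - (1/(σ*r)) • G := by
      rw [hb, hm, hG, hx k, hy k, hω, hLr]
      match_scalars <;> field_simp <;> ring
    -- descent step
    have e1 : f (y (k+1)) ≤ f (x k) - 1/(2*L) * ‖G‖ ^ 2 := by
      have d1 := descent_lemma' hgrad hlip (x k) (y (k+1))
      rw [← hG] at d1
      have hd : y (k+1) - x k = -((1/L) • G) := by rw [hy k, hG]; module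
      rw [hd] at d1
      have i1 : ⟪G, -((1/L) • G)⟫_ℝ = -(1/L) * ‖G‖ ^ 2 := by
        rw [inner_neg_right, real_inner_smul_right, real_inner_self_eq_norm_sq]; ring
      have i2 : ‖-((1/L) • G)‖ ^ 2 = (1/L) ^ 2 * ‖G‖ ^ 2 := by
        rw [norm_neg, norm_smul, Real.norm_eq_abs, abs_of_pos (by positivity : (0:ℝ) < 1/L)]
        ring
      rw [i1, i2] at d1
      have i4 : f (x k) + -(1/L) * ‖G‖ ^ 2 + L / 2 * ((1/L) ^ 2 * ‖G‖ ^ 2)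
          = f (x k) - 1/(2*L) * ‖G‖ ^ 2 := by
        field_simp
        ring
      exact d1.trans (le_of_eq i4)
    -- strong convexity inequalities from hcon
    have e2 : f (x k) + ⟪G, mm⟫_ℝ + σ / 2 * ‖mm‖ ^ 2 ≤ f (y k) := by
      have := hcon k hk (y k) (Set.mem_insert _ _)
      rw [← hG, ← hm] at this
      exact this
    have e3 : f (x k) - ⟪G, b⟫_ℝ + σ / 2 * ‖b‖ ^ 2 ≤ f w := by
      have := hcon k hk w (Set.mem_insert_of_mem _ rfl)
      have hwx : w - x k = -b := by rw [hb]; module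
      rw [hwx, ← hG, inner_neg_right, norm_neg] at this
      linarith
    -- expansion identities
    have e4 : σ / 2 * ‖(1+r) • x (k+1) - r • y (k+1) - w‖ ^ 2 =
        σ / 2 * ‖b - (r-1) • mm‖ ^ 2 - τ * ⟪G, b⟫_ℝ + (1-τ) * ⟪G, mm⟫_ℝ
          + 1/(2*L) * ‖G‖ ^ 2 := by
      rw [hzk1, norm_sub_sq_real, real_inner_smul_right, inner_sub_left,
        real_inner_smul_left, norm_smul, Real.norm_eq_abs,
        abs_of_pos (by positivity : (0:ℝ) < 1/(σ*r)),
        real_inner_comm G b, real_inner_comm G mm, hLr, hτ]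
      field_simp
      ring
    have e5 : σ / 2 * ‖b - (r-1) • mm‖ ^ 2 = σ / 2 * ((1-τ) * ‖b - r • mm‖ ^ 2 + τ * ‖b‖ ^ 2)
        - σ / 2 * (τ * (1-τ) * r ^ 2) * ‖mm‖ ^ 2 := by
      rw [norm_sub_sq_real, norm_sub_sq_real, real_inner_smul_right, real_inner_smul_right,
        norm_smul, norm_smul, Real.norm_eq_abs, Real.norm_eq_abs,
        abs_of_nonneg (by linarith : (0:ℝ) ≤ r - 1), abs_of_pos hr0, hτ]
      field_simp
      ring
    have p2 : (1-τ) * (f (x k) + ⟪G, mm⟫_ℝ + σ / 2 * ‖mm‖ ^ 2) ≤ (1-τ) * f (y k) :=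
      mul_le_mul_of_nonneg_left e2 h1τ
    have p3 : τ * (f (x k) - ⟪G, b⟫_ℝ + σ / 2 * ‖b‖ ^ 2) ≤ τ * f w :=
      mul_le_mul_of_nonneg_left e3 hτ0.le
    have p4 : 0 ≤ σ / 2 * (1-τ) * ‖mm‖ ^ 2 :=
      mul_nonneg (mul_nonneg (by positivity) h1τ) (sq_nonneg _)
    have p5 : 0 ≤ σ / 2 * (τ * (1-τ) * r ^ 2) * ‖mm‖ ^ 2 :=
      mul_nonneg (mul_nonneg (by positivity)
        (mul_nonneg (mul_nonneg hτ0.le h1τ) (sq_nonneg _))) (sq_nonneg _)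
    rw [hzk]
    linarith [e1, p2, p3, p4, p5, e4, e5]
  -- induction on the potential
  have hind : ∀ k, k ≤ t →
      f (y k) - f w + σ / 2 * ‖(1+r) • x k - r • y k - w‖ ^ 2 ≤
      (1-τ) ^ k * (f (y 0) - f w + σ / 2 * ‖(1+r) • x 0 - r • y 0 - w‖ ^ 2) := by
    intro k
    induction k with
    | zero => intro _; simp
    | succ n ih =>
      intro hn
      have hn' : n < t := Nat.lt_of_succ_le hn
      have h1 := key n hn'
      have h2 := ih (le_of_lt hn')
      calc f (y (n+1)) - f w + σ / 2 * ‖(1+r) • x (n+1) - r • y (n+1) - w‖ ^ 2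
          ≤ (1-τ) * (f (y n) - f w + σ / 2 * ‖(1+r) • x n - r • y n - w‖ ^ 2) := h1
        _ ≤ (1-τ) * ((1-τ) ^ n * (f (y 0) - f w + σ / 2 * ‖(1+r) • x 0 - r • y 0 - w‖ ^ 2)) :=
            mul_le_mul_of_nonneg_left h2 h1τ
        _ = (1-τ) ^ (n+1) * (f (y 0) - f w + σ / 2 * ‖(1+r) • x 0 - r • y 0 - w‖ ^ 2) := by
            ring
  have hz0 : (1+r) • x 0 - r • y 0 - w = y 0 - w := by rw [hx0]; module
  have hfinal := hind t le_rfl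
  rw [hz0] at hfinal
  have hnn : 0 ≤ σ / 2 * ‖(1+r) • x t - r • y t - w‖ ^ 2 := by positivity
  have hnorm : ‖y 0 - w‖ = ‖w - y 0‖ := norm_sub_rev _ _
  rw [hnorm] at hfinal
  have : (1 - 1 / Real.sqrt κ) ^ t * (f (y 0) - f w + σ / 2 * ‖w - y 0‖ ^ 2)
      = (1-τ) ^ t * (f (y 0) - f w + σ / 2 * ‖w - y 0‖ ^ 2) := by rw [hτ, hr]
  linarith [hslow, hfinal, hnn, this]
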